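/- Let σ : ℝ³ → ℝ³ be the reflection in one of the coordinate planes Oxy, Oxz, Oyz (the linear map negating exactly one coordinate). Let b_{ij} ∈ ℝ³ (0 ≤ i,j ≤ 4) be control points whose bi-quartic Bézier surface x(u,v) = Σ_{i,j=0}^4 b_{ij} B_i^4(u) B_j^4(v) is harmonic, and suppose the nine points b_{00}, b_{10}, b_{20}, b_{30}, b_{40}, b_{04}, b_{14}, b_{34}, b_{44} satisfy σ(b_{00}) = b_{40}, σ(b_{10}) = b_{30}, σ(b_{20}) = b_{20}, σ(b_{04}) = b_{44}, and σ(b_{14}) = b_{34}. Then for all (u,v) ∈ ℝ², σ(x(u,v)) = x(1−u, v); in particular the image of the surface is symmetric with respect to that coordinate plane. -/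

import Mathlib

noncomputable section

/-- Euclidean dot product in `ℝ³`. -/
def dot3 (a b : Fin 3 → ℝ) : ℝ := a 0 * b 0 + a 1 * b 1 + a 2 * b 2

/-- Cross product in `ℝ³`. -/
def cross3 (a b : Fin 3 → ℝ) : Fin 3 → ℝ :=
  ![a 1 * b 2 - a 2 * b 1, a 2 * b 0 - a 0 * b 2, a 0 * b 1 - a 1 * b 0]

/-- Partial derivative of a chart with respect to the first variable. -/
def pu (x : ℝ → ℝ → Fin 3 → ℝ) : ℝ → ℝ → Fin 3 → ℝ :=
  fun u v i => deriv (fun t => x t v i) u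

/-- Partial derivative of a chart with respect to the second variable. -/
def pv (x : ℝ → ℝ → Fin 3 → ℝ) : ℝ → ℝ → Fin 3 → ℝ :=
  fun u v i => deriv (fun t => x u t i) v

/-- The chart is isothermal: `E = G` and `F = 0` identically. -/
def Isothermal (x : ℝ → ℝ → Fin 3 → ℝ) : Prop :=
  ∀ u v : ℝ,
    dot3 (pu x u v) (pu x u v) = dot3 (pv x u v) (pv x u v) ∧
    dot3 (pu x u v) (pv x u v) = 0

/-- The chart is harmonic: `x_uu + x_vv = 0` identically. -/
def Harmonic (x : ℝ → ℝ → Fin 3 → ℝ) : Prop :=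
  ∀ u v : ℝ, ∀ i : Fin 3, pu (pu x) u v i + pv (pv x) u v i = 0

/-- The chart `x` is generated by the Weierstrass data `(f, g)`:
for `z = u + iv`, `x_u - i x_v = (½ f (1 - g²), (i/2) f (1 + g²), f g)`. -/
def GeneratedBy (x : ℝ → ℝ → Fin 3 → ℝ) (f g : ℂ → ℂ) : Prop :=
  ∀ u v : ℝ,
    (pu x u v 0 : ℂ) - Complex.I * (pv x u v 0)
        = (1 / 2) * f (u + v * Complex.I) * (1 - (g (u + v * Complex.I)) ^ 2) ∧
    (pu x u v 1 : ℂ) - Complex.I * (pv x u v 1)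
        = (Complex.I / 2) * f (u + v * Complex.I) * (1 + (g (u + v * Complex.I)) ^ 2) ∧
    (pu x u v 2 : ℂ) - Complex.I * (pv x u v 2)
        = f (u + v * Complex.I) * g (u + v * Complex.I)

/-- Bernstein polynomial of degree 4. -/
def B4 (i : Fin 5) (t : ℝ) : ℝ :=
  (Nat.choose 4 (i : ℕ) : ℝ) * t ^ (i : ℕ) * (1 - t) ^ (4 - (i : ℕ))

/-- The bi-quartic tensor-product Bézier surface with control net `b`. -/
def bezier (b : Fin 5 → Fin 5 → Fin 3 → ℝ) : ℝ → ℝ → Fin 3 → ℝ :=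
  fun u v i => ∑ p : Fin 5, ∑ q : Fin 5, b p q i * B4 p u * B4 q v


/-- auxiliary: derivative bookkeeping -/
def dmono (c : ℝ) (a b : ℕ) (t : ℝ) : ℝ :=
  c * a * t ^ (a - 1) * (1 - t) ^ b - c * b * t ^ a * (1 - t) ^ (b - 1)

lemma hasDerivAt_mono (c : ℝ) (a b : ℕ) (t : ℝ) :
    HasDerivAt (fun t : ℝ => c * t ^ a * (1 - t) ^ b) (dmono c a b t) t := by
  have h1 : HasDerivAt (fun t : ℝ => c * t ^ a) (c * (a * t ^ (a - 1))) t :=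
    (hasDerivAt_pow a t).const_mul c
  have h2 : HasDerivAt (fun t : ℝ => (1 - t) ^ b) ((b : ℝ) * (1 - t) ^ (b - 1) * (-1)) t :=
    ((hasDerivAt_id t).const_sub 1).pow b
  have : HasDerivAt (fun t : ℝ => c * t ^ a * (1 - t) ^ b) (c * (a * t ^ (a - 1)) * (1 - t) ^ b + c * t ^ a * ((b : ℝ) * (1 - t) ^ (b - 1) * (-1))) t := h1.mul h2
  convert this using 1
  simp [dmono]; ring

def dB (p : Fin 5) (t : ℝ) : ℝ := dmono (Nat.choose 4 (p : ℕ) : ℝ) (p : ℕ) (4 - (p : ℕ)) t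

lemma hasDerivAt_B4 (p : Fin 5) (t : ℝ) : HasDerivAt (B4 p) (dB p t) t :=
  hasDerivAt_mono _ _ _ t

def ddB (p : Fin 5) (t : ℝ) : ℝ :=
  dmono ((Nat.choose 4 (p : ℕ) : ℝ) * ((p : ℕ) : ℝ)) ((p : ℕ) - 1) (4 - (p : ℕ)) t -
    dmono ((Nat.choose 4 (p : ℕ) : ℝ) * ((4 - (p : ℕ) : ℕ) : ℝ)) (p : ℕ) (4 - (p : ℕ) - 1) t

lemma hasDerivAt_dB (p : Fin 5) (t : ℝ) : HasDerivAt (fun t => dB p t) (ddB p t) t :=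
  (hasDerivAt_mono _ _ _ t).sub (hasDerivAt_mono _ _ _ t)

lemma pu_bezier (b : Fin 5 → Fin 5 → Fin 3 → ℝ) :
    pu (bezier b) = fun u v i => ∑ p : Fin 5, ∑ q : Fin 5, b p q i * dB p u * B4 q v := by
  funext u v i
  show deriv (fun t => ∑ p : Fin 5, ∑ q : Fin 5, b p q i * B4 p t * B4 q v) u = _
  exact (HasDerivAt.fun_sum fun p _ => HasDerivAt.fun_sum fun q _ =>
    ((hasDerivAt_B4 p u).const_mul (b p q i)).mul_const (B4 q v)).deriv

lemma pupu_bezier (b : Fin 5 → Fin 5 → Fin 3 → ℝ) :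
    pu (pu (bezier b)) = fun u v i => ∑ p : Fin 5, ∑ q : Fin 5, b p q i * ddB p u * B4 q v := by
  rw [pu_bezier]
  funext u v i
  show deriv (fun t => ∑ p : Fin 5, ∑ q : Fin 5, b p q i * dB p t * B4 q v) u = _
  exact (HasDerivAt.fun_sum fun p _ => HasDerivAt.fun_sum fun q _ =>
    ((hasDerivAt_dB p u).const_mul (b p q i)).mul_const (B4 q v)).deriv

lemma pv_bezier (b : Fin 5 → Fin 5 → Fin 3 → ℝ) :
    pv (bezier b) = fun u v i => ∑ p : Fin 5, ∑ q : Fin 5, b p q i * B4 p u * dB q v := by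
  funext u v i
  show deriv (fun t => ∑ p : Fin 5, ∑ q : Fin 5, b p q i * B4 p u * B4 q t) v = _
  exact (HasDerivAt.fun_sum fun p _ => HasDerivAt.fun_sum fun q _ =>
    (hasDerivAt_B4 q v).const_mul (b p q i * B4 p u)).deriv

lemma pvpv_bezier (b : Fin 5 → Fin 5 → Fin 3 → ℝ) :
    pv (pv (bezier b)) = fun u v i => ∑ p : Fin 5, ∑ q : Fin 5, b p q i * B4 p u * ddB q v := by
  rw [pv_bezier]
  funext u v i
  show deriv (fun t => ∑ p : Fin 5, ∑ q : Fin 5, b p q i * B4 p u * dB q t) v = _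
  exact (HasDerivAt.fun_sum fun p _ => HasDerivAt.fun_sum fun q _ =>
    (hasDerivAt_dB q v).const_mul (b p q i * B4 p u)).deriv

lemma harm_key (b : Fin 5 → Fin 5 → Fin 3 → ℝ) (h : Harmonic (bezier b)) :
    ∀ u v : ℝ, ∀ i : Fin 3,
      (∑ p : Fin 5, ∑ q : Fin 5, b p q i * ddB p u * B4 q v) +
      (∑ p : Fin 5, ∑ q : Fin 5, b p q i * B4 p u * ddB q v) = 0 := by
  intro u v i
  have := h u v i
  rw [pupu_bezier, pvpv_bezier] at this
  exact this

set_option maxHeartbeats 4000000 in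
/-- if a harmonic bi-quartic Bézier control net has its nine
determining boundary points symmetric with respect to a coordinate plane
(reflection `σ` negating exactly one coordinate), then the surface itself is
symmetric: `σ(x(u,v)) = x(1-u, v)` for all `(u,v)`. -/
theorem harmonic_bezier_surface_symmetric
    (σ : (Fin 3 → ℝ) → (Fin 3 → ℝ))
    (hσ : ∃ k : Fin 3, σ = fun p i => if i = k then -p i else p i)
    (b : Fin 5 → Fin 5 → Fin 3 → ℝ)
    (hharm : Harmonic (bezier b))
    (h00 : σ (b 0 0) = b 4 0) (h10 : σ (b 1 0) = b 3 0) (h20 : σ (b 2 0) = b 2 0)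
    (h04 : σ (b 0 4) = b 4 4) (h14 : σ (b 1 4) = b 3 4) :
    ∀ u v : ℝ, σ (bezier b u v) = bezier b (1 - u) v := by
  obtain ⟨k, rfl⟩ := hσ
  intro u v
  funext i
  show (if i = k then -(bezier b u v i) else bezier b u v i) = bezier b (1 - u) v i
  have e00 := congrFun h00 i
  have e10 := congrFun h10 i
  have e20 := congrFun h20 i
  have e04 := congrFun h04 i
  have e14 := congrFun h14 i
  simp only [] at e00 e10 e20 e04 e14
  have H00 : 24*b 0 0 i - 24*b 0 1 i + 12*b 0 2 i - 24*b 1 0 i + 12*b 2 0 i = (0:ℝ) := by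
    have hh := harm_key b hharm 0 0 i
    simp only [Fin.sum_univ_five] at hh
    norm_num [B4, ddB, dmono, Nat.choose, show ((0:Fin 5):ℕ)=0 from rfl, show ((1:Fin 5):ℕ)=1 from rfl, show ((2:Fin 5):ℕ)=2 from rfl, show ((3:Fin 5):ℕ)=3 from rfl, show ((4:Fin 5):ℕ)=4 from rfl] at hh
    linarith
  have H01 : 12*b 0 2 i - 24*b 0 3 i + 24*b 0 4 i - 24*b 1 4 i + 12*b 2 4 i = (0:ℝ) := by
    have hh := harm_key b hharm 0 1 i
    simp only [Fin.sum_univ_five] at hh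
    norm_num [B4, ddB, dmono, Nat.choose, show ((0:Fin 5):ℕ)=0 from rfl, show ((1:Fin 5):ℕ)=1 from rfl, show ((2:Fin 5):ℕ)=2 from rfl, show ((3:Fin 5):ℕ)=3 from rfl, show ((4:Fin 5):ℕ)=4 from rfl] at hh
    linarith
  have H02 : 24*b 0 0 i - 168*b 0 1 i + 444*b 0 2 i - 528*b 0 3 i + 240*b 0 4 i - 24*b 1 0 i + 192*b 1 1 i - 576*b 1 2 i + 768*b 1 3 i - 384*b 1 4 i + 12*b 2 0 i - 96*b 2 1 i + 288*b 2 2 i - 384*b 2 3 i + 192*b 2 4 i = (0:ℝ) := by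
    have hh := harm_key b hharm 0 2 i
    simp only [Fin.sum_univ_five] at hh
    norm_num [B4, ddB, dmono, Nat.choose, show ((0:Fin 5):ℕ)=0 from rfl, show ((1:Fin 5):ℕ)=1 from rfl, show ((2:Fin 5):ℕ)=2 from rfl, show ((3:Fin 5):ℕ)=3 from rfl, show ((4:Fin 5):ℕ)=4 from rfl] at hh
    linarith
  have H03 : 240*b 0 0 i - 1392*b 0 1 i + 3036*b 0 2 i - 2952*b 0 3 i + 1080*b 0 4 i - 384*b 1 0 i + 2304*b 1 1 i - 5184*b 1 2 i + 5184*b 1 3 i - 1944*b 1 4 i + 192*b 2 0 i - 1152*b 2 1 i + 2592*b 2 2 i - 2592*b 2 3 i + 972*b 2 4 i = (0:ℝ) := by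
    have hh := harm_key b hharm 0 3 i
    simp only [Fin.sum_univ_five] at hh
    norm_num [B4, ddB, dmono, Nat.choose, show ((0:Fin 5):ℕ)=0 from rfl, show ((1:Fin 5):ℕ)=1 from rfl, show ((2:Fin 5):ℕ)=2 from rfl, show ((3:Fin 5):ℕ)=3 from rfl, show ((4:Fin 5):ℕ)=4 from rfl] at hh
    linarith
  have H04 : 1080*b 0 0 i - 5688*b 0 1 i + 11244*b 0 2 i - 9888*b 0 3 i + 3264*b 0 4 i - 1944*b 1 0 i + 10368*b 1 1 i - 20736*b 1 2 i + 18432*b 1 3 i - 6144*b 1 4 i + 972*b 2 0 i - 5184*b 2 1 i + 10368*b 2 2 i - 9216*b 2 3 i + 3072*b 2 4 i = (0:ℝ) := by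
    have hh := harm_key b hharm 0 4 i
    simp only [Fin.sum_univ_five] at hh
    norm_num [B4, ddB, dmono, Nat.choose, show ((0:Fin 5):ℕ)=0 from rfl, show ((1:Fin 5):ℕ)=1 from rfl, show ((2:Fin 5):ℕ)=2 from rfl, show ((3:Fin 5):ℕ)=3 from rfl, show ((4:Fin 5):ℕ)=4 from rfl] at hh
    linarith
  have H10 : 12*b 2 0 i - 24*b 3 0 i + 24*b 4 0 i - 24*b 4 1 i + 12*b 4 2 i = (0:ℝ) := by
    have hh := harm_key b hharm 1 0 i
    simp only [Fin.sum_univ_five] at hh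
    norm_num [B4, ddB, dmono, Nat.choose, show ((0:Fin 5):ℕ)=0 from rfl, show ((1:Fin 5):ℕ)=1 from rfl, show ((2:Fin 5):ℕ)=2 from rfl, show ((3:Fin 5):ℕ)=3 from rfl, show ((4:Fin 5):ℕ)=4 from rfl] at hh
    linarith
  have H11 : 12*b 2 4 i - 24*b 3 4 i + 12*b 4 2 i - 24*b 4 3 i + 24*b 4 4 i = (0:ℝ) := by
    have hh := harm_key b hharm 1 1 i
    simp only [Fin.sum_univ_five] at hh
    norm_num [B4, ddB, dmono, Nat.choose, show ((0:Fin 5):ℕ)=0 from rfl, show ((1:Fin 5):ℕ)=1 from rfl, show ((2:Fin 5):ℕ)=2 from rfl, show ((3:Fin 5):ℕ)=3 from rfl, show ((4:Fin 5):ℕ)=4 from rfl] at hh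
    linarith
  have H12 : 12*b 2 0 i - 96*b 2 1 i + 288*b 2 2 i - 384*b 2 3 i + 192*b 2 4 i - 24*b 3 0 i + 192*b 3 1 i - 576*b 3 2 i + 768*b 3 3 i - 384*b 3 4 i + 24*b 4 0 i - 168*b 4 1 i + 444*b 4 2 i - 528*b 4 3 i + 240*b 4 4 i = (0:ℝ) := by
    have hh := harm_key b hharm 1 2 i
    simp only [Fin.sum_univ_five] at hh
    norm_num [B4, ddB, dmono, Nat.choose, show ((0:Fin 5):ℕ)=0 from rfl, show ((1:Fin 5):ℕ)=1 from rfl, show ((2:Fin 5):ℕ)=2 from rfl, show ((3:Fin 5):ℕ)=3 from rfl, show ((4:Fin 5):ℕ)=4 from rfl] at hh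
    linarith
  have H13 : 192*b 2 0 i - 1152*b 2 1 i + 2592*b 2 2 i - 2592*b 2 3 i + 972*b 2 4 i - 384*b 3 0 i + 2304*b 3 1 i - 5184*b 3 2 i + 5184*b 3 3 i - 1944*b 3 4 i + 240*b 4 0 i - 1392*b 4 1 i + 3036*b 4 2 i - 2952*b 4 3 i + 1080*b 4 4 i = (0:ℝ) := by
    have hh := harm_key b hharm 1 3 i
    simp only [Fin.sum_univ_five] at hh
    norm_num [B4, ddB, dmono, Nat.choose, show ((0:Fin 5):ℕ)=0 from rfl, show ((1:Fin 5):ℕ)=1 from rfl, show ((2:Fin 5):ℕ)=2 from rfl, show ((3:Fin 5):ℕ)=3 from rfl, show ((4:Fin 5):ℕ)=4 from rfl] at hh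
    linarith
  have H14 : 972*b 2 0 i - 5184*b 2 1 i + 10368*b 2 2 i - 9216*b 2 3 i + 3072*b 2 4 i - 1944*b 3 0 i + 10368*b 3 1 i - 20736*b 3 2 i + 18432*b 3 3 i - 6144*b 3 4 i + 1080*b 4 0 i - 5688*b 4 1 i + 11244*b 4 2 i - 9888*b 4 3 i + 3264*b 4 4 i = (0:ℝ) := by
    have hh := harm_key b hharm 1 4 i
    simp only [Fin.sum_univ_five] at hh
    norm_num [B4, ddB, dmono, Nat.choose, show ((0:Fin 5):ℕ)=0 from rfl, show ((1:Fin 5):ℕ)=1 from rfl, show ((2:Fin 5):ℕ)=2 from rfl, show ((3:Fin 5):ℕ)=3 from rfl, show ((4:Fin 5):ℕ)=4 from rfl] at hh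
    linarith
  have H20 : 24*b 0 0 i - 24*b 0 1 i + 12*b 0 2 i - 168*b 1 0 i + 192*b 1 1 i - 96*b 1 2 i + 444*b 2 0 i - 576*b 2 1 i + 288*b 2 2 i - 528*b 3 0 i + 768*b 3 1 i - 384*b 3 2 i + 240*b 4 0 i - 384*b 4 1 i + 192*b 4 2 i = (0:ℝ) := by
    have hh := harm_key b hharm 2 0 i
    simp only [Fin.sum_univ_five] at hh
    norm_num [B4, ddB, dmono, Nat.choose, show ((0:Fin 5):ℕ)=0 from rfl, show ((1:Fin 5):ℕ)=1 from rfl, show ((2:Fin 5):ℕ)=2 from rfl, show ((3:Fin 5):ℕ)=3 from rfl, show ((4:Fin 5):ℕ)=4 from rfl] at hh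
    linarith
  have H21 : 12*b 0 2 i - 24*b 0 3 i + 24*b 0 4 i - 96*b 1 2 i + 192*b 1 3 i - 168*b 1 4 i + 288*b 2 2 i - 576*b 2 3 i + 444*b 2 4 i - 384*b 3 2 i + 768*b 3 3 i - 528*b 3 4 i + 192*b 4 2 i - 384*b 4 3 i + 240*b 4 4 i = (0:ℝ) := by
    have hh := harm_key b hharm 2 1 i
    simp only [Fin.sum_univ_five] at hh
    norm_num [B4, ddB, dmono, Nat.choose, show ((0:Fin 5):ℕ)=0 from rfl, show ((1:Fin 5):ℕ)=1 from rfl, show ((2:Fin 5):ℕ)=2 from rfl, show ((3:Fin 5):ℕ)=3 from rfl, show ((4:Fin 5):ℕ)=4 from rfl] at hh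
    linarith
  have H22 : 24*b 0 0 i - 168*b 0 1 i + 444*b 0 2 i - 528*b 0 3 i + 240*b 0 4 i - 168*b 1 0 i + 1152*b 1 1 i - 2976*b 1 2 i + 3456*b 1 3 i - 1536*b 1 4 i + 444*b 2 0 i - 2976*b 2 1 i + 7488*b 2 2 i - 8448*b 2 3 i + 3648*b 2 4 i - 528*b 3 0 i + 3456*b 3 1 i - 8448*b 3 2 i + 9216*b 3 3 i - 3840*b 3 4 i + 240*b 4 0 i - 1536*b 4 1 i + 3648*b 4 2 i - 3840*b 4 3 i + 1536*b 4 4 i = (0:ℝ) := by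
    have hh := harm_key b hharm 2 2 i
    simp only [Fin.sum_univ_five] at hh
    norm_num [B4, ddB, dmono, Nat.choose, show ((0:Fin 5):ℕ)=0 from rfl, show ((1:Fin 5):ℕ)=1 from rfl, show ((2:Fin 5):ℕ)=2 from rfl, show ((3:Fin 5):ℕ)=3 from rfl, show ((4:Fin 5):ℕ)=4 from rfl] at hh
    linarith
  have H23 : 240*b 0 0 i - 1392*b 0 1 i + 3036*b 0 2 i - 2952*b 0 3 i + 1080*b 0 4 i - 1536*b 1 0 i + 8832*b 1 1 i - 19104*b 1 2 i + 18432*b 1 3 i - 6696*b 1 4 i + 3648*b 2 0 i - 20736*b 2 1 i + 44352*b 2 2 i - 42336*b 2 3 i + 15228*b 2 4 i - 3840*b 3 0 i + 21504*b 3 1 i - 45312*b 3 2 i + 42624*b 3 3 i - 15120*b 3 4 i + 1536*b 4 0 i - 8448*b 4 1 i + 17472*b 4 2 i - 16128*b 4 3 i + 5616*b 4 4 i = (0:ℝ) := by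
    have hh := harm_key b hharm 2 3 i
    simp only [Fin.sum_univ_five] at hh
    norm_num [B4, ddB, dmono, Nat.choose, show ((0:Fin 5):ℕ)=0 from rfl, show ((1:Fin 5):ℕ)=1 from rfl, show ((2:Fin 5):ℕ)=2 from rfl, show ((3:Fin 5):ℕ)=3 from rfl, show ((4:Fin 5):ℕ)=4 from rfl] at hh
    linarith
  have H24 : 1080*b 0 0 i - 5688*b 0 1 i + 11244*b 0 2 i - 9888*b 0 3 i + 3264*b 0 4 i - 6696*b 1 0 i + 35136*b 1 1 i - 69216*b 1 2 i + 60672*b 1 3 i - 19968*b 1 4 i + 15228*b 2 0 i - 79488*b 2 1 i + 155808*b 2 2 i - 135936*b 2 3 i + 44544*b 2 4 i - 15120*b 3 0 i + 78336*b 3 1 i - 152448*b 3 2 i + 132096*b 3 3 i - 43008*b 3 4 i + 5616*b 4 0 i - 28800*b 4 1 i + 55488*b 4 2 i - 47616*b 4 3 i + 15360*b 4 4 i = (0:ℝ) := by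
    have hh := harm_key b hharm 2 4 i
    simp only [Fin.sum_univ_five] at hh
    norm_num [B4, ddB, dmono, Nat.choose, show ((0:Fin 5):ℕ)=0 from rfl, show ((1:Fin 5):ℕ)=1 from rfl, show ((2:Fin 5):ℕ)=2 from rfl, show ((3:Fin 5):ℕ)=3 from rfl, show ((4:Fin 5):ℕ)=4 from rfl] at hh
    linarith
  have H30 : 240*b 0 0 i - 384*b 0 1 i + 192*b 0 2 i - 1392*b 1 0 i + 2304*b 1 1 i - 1152*b 1 2 i + 3036*b 2 0 i - 5184*b 2 1 i + 2592*b 2 2 i - 2952*b 3 0 i + 5184*b 3 1 i - 2592*b 3 2 i + 1080*b 4 0 i - 1944*b 4 1 i + 972*b 4 2 i = (0:ℝ) := by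
    have hh := harm_key b hharm 3 0 i
    simp only [Fin.sum_univ_five] at hh
    norm_num [B4, ddB, dmono, Nat.choose, show ((0:Fin 5):ℕ)=0 from rfl, show ((1:Fin 5):ℕ)=1 from rfl, show ((2:Fin 5):ℕ)=2 from rfl, show ((3:Fin 5):ℕ)=3 from rfl, show ((4:Fin 5):ℕ)=4 from rfl] at hh
    linarith
  have H31 : 192*b 0 2 i - 384*b 0 3 i + 240*b 0 4 i - 1152*b 1 2 i + 2304*b 1 3 i - 1392*b 1 4 i + 2592*b 2 2 i - 5184*b 2 3 i + 3036*b 2 4 i - 2592*b 3 2 i + 5184*b 3 3 i - 2952*b 3 4 i + 972*b 4 2 i - 1944*b 4 3 i + 1080*b 4 4 i = (0:ℝ) := by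
    have hh := harm_key b hharm 3 1 i
    simp only [Fin.sum_univ_five] at hh
    norm_num [B4, ddB, dmono, Nat.choose, show ((0:Fin 5):ℕ)=0 from rfl, show ((1:Fin 5):ℕ)=1 from rfl, show ((2:Fin 5):ℕ)=2 from rfl, show ((3:Fin 5):ℕ)=3 from rfl, show ((4:Fin 5):ℕ)=4 from rfl] at hh
    linarith
  have H32 : 240*b 0 0 i - 1536*b 0 1 i + 3648*b 0 2 i - 3840*b 0 3 i + 1536*b 0 4 i - 1392*b 1 0 i + 8832*b 1 1 i - 20736*b 1 2 i + 21504*b 1 3 i - 8448*b 1 4 i + 3036*b 2 0 i - 19104*b 2 1 i + 44352*b 2 2 i - 45312*b 2 3 i + 17472*b 2 4 i - 2952*b 3 0 i + 18432*b 3 1 i - 42336*b 3 2 i + 42624*b 3 3 i - 16128*b 3 4 i + 1080*b 4 0 i - 6696*b 4 1 i + 15228*b 4 2 i - 15120*b 4 3 i + 5616*b 4 4 i = (0:ℝ) := by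
    have hh := harm_key b hharm 3 2 i
    simp only [Fin.sum_univ_five] at hh
    norm_num [B4, ddB, dmono, Nat.choose, show ((0:Fin 5):ℕ)=0 from rfl, show ((1:Fin 5):ℕ)=1 from rfl, show ((2:Fin 5):ℕ)=2 from rfl, show ((3:Fin 5):ℕ)=3 from rfl, show ((4:Fin 5):ℕ)=4 from rfl] at hh
    linarith
  have H33 : 1536*b 0 0 i - 8448*b 0 1 i + 17472*b 0 2 i - 16128*b 0 3 i + 5616*b 0 4 i - 8448*b 1 0 i + 46080*b 1 1 i - 94464*b 1 2 i + 86400*b 1 3 i - 29808*b 1 4 i + 17472*b 2 0 i - 94464*b 2 1 i + 191808*b 2 2 i - 173664*b 2 3 i + 59292*b 2 4 i - 16128*b 3 0 i + 86400*b 3 1 i - 173664*b 3 2 i + 155520*b 3 3 i - 52488*b 3 4 i + 5616*b 4 0 i - 29808*b 4 1 i + 59292*b 4 2 i - 52488*b 4 3 i + 17496*b 4 4 i = (0:ℝ) := by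
    have hh := harm_key b hharm 3 3 i
    simp only [Fin.sum_univ_five] at hh
    norm_num [B4, ddB, dmono, Nat.choose, show ((0:Fin 5):ℕ)=0 from rfl, show ((1:Fin 5):ℕ)=1 from rfl, show ((2:Fin 5):ℕ)=2 from rfl, show ((3:Fin 5):ℕ)=3 from rfl, show ((4:Fin 5):ℕ)=4 from rfl] at hh
    linarith
  have H34 : 5616*b 0 0 i - 28800*b 0 1 i + 55488*b 0 2 i - 47616*b 0 3 i + 15360*b 0 4 i - 29808*b 1 0 i + 152064*b 1 1 i - 291456*b 1 2 i + 248832*b 1 3 i - 79872*b 1 4 i + 59292*b 2 0 i - 300672*b 2 1 i + 572832*b 2 2 i - 486144*b 2 3 i + 155136*b 2 4 i - 52488*b 3 0 i + 264384*b 3 1 i - 500256*b 3 2 i + 421632*b 3 3 i - 133632*b 3 4 i + 17496*b 4 0 i - 87480*b 4 1 i + 164268*b 4 2 i - 137376*b 4 3 i + 43200*b 4 4 i = (0:ℝ) := by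
    have hh := harm_key b hharm 3 4 i
    simp only [Fin.sum_univ_five] at hh
    norm_num [B4, ddB, dmono, Nat.choose, show ((0:Fin 5):ℕ)=0 from rfl, show ((1:Fin 5):ℕ)=1 from rfl, show ((2:Fin 5):ℕ)=2 from rfl, show ((3:Fin 5):ℕ)=3 from rfl, show ((4:Fin 5):ℕ)=4 from rfl] at hh
    linarith
  have H40 : 1080*b 0 0 i - 1944*b 0 1 i + 972*b 0 2 i - 5688*b 1 0 i + 10368*b 1 1 i - 5184*b 1 2 i + 11244*b 2 0 i - 20736*b 2 1 i + 10368*b 2 2 i - 9888*b 3 0 i + 18432*b 3 1 i - 9216*b 3 2 i + 3264*b 4 0 i - 6144*b 4 1 i + 3072*b 4 2 i = (0:ℝ) := by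
    have hh := harm_key b hharm 4 0 i
    simp only [Fin.sum_univ_five] at hh
    norm_num [B4, ddB, dmono, Nat.choose, show ((0:Fin 5):ℕ)=0 from rfl, show ((1:Fin 5):ℕ)=1 from rfl, show ((2:Fin 5):ℕ)=2 from rfl, show ((3:Fin 5):ℕ)=3 from rfl, show ((4:Fin 5):ℕ)=4 from rfl] at hh
    linarith
  have H41 : 972*b 0 2 i - 1944*b 0 3 i + 1080*b 0 4 i - 5184*b 1 2 i + 10368*b 1 3 i - 5688*b 1 4 i + 10368*b 2 2 i - 20736*b 2 3 i + 11244*b 2 4 i - 9216*b 3 2 i + 18432*b 3 3 i - 9888*b 3 4 i + 3072*b 4 2 i - 6144*b 4 3 i + 3264*b 4 4 i = (0:ℝ) := by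
    have hh := harm_key b hharm 4 1 i
    simp only [Fin.sum_univ_five] at hh
    norm_num [B4, ddB, dmono, Nat.choose, show ((0:Fin 5):ℕ)=0 from rfl, show ((1:Fin 5):ℕ)=1 from rfl, show ((2:Fin 5):ℕ)=2 from rfl, show ((3:Fin 5):ℕ)=3 from rfl, show ((4:Fin 5):ℕ)=4 from rfl] at hh
    linarith
  have H42 : 1080*b 0 0 i - 6696*b 0 1 i + 15228*b 0 2 i - 15120*b 0 3 i + 5616*b 0 4 i - 5688*b 1 0 i + 35136*b 1 1 i - 79488*b 1 2 i + 78336*b 1 3 i - 28800*b 1 4 i + 11244*b 2 0 i - 69216*b 2 1 i + 155808*b 2 2 i - 152448*b 2 3 i + 55488*b 2 4 i - 9888*b 3 0 i + 60672*b 3 1 i - 135936*b 3 2 i + 132096*b 3 3 i - 47616*b 3 4 i + 3264*b 4 0 i - 19968*b 4 1 i + 44544*b 4 2 i - 43008*b 4 3 i + 15360*b 4 4 i = (0:ℝ) := by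
    have hh := harm_key b hharm 4 2 i
    simp only [Fin.sum_univ_five] at hh
    norm_num [B4, ddB, dmono, Nat.choose, show ((0:Fin 5):ℕ)=0 from rfl, show ((1:Fin 5):ℕ)=1 from rfl, show ((2:Fin 5):ℕ)=2 from rfl, show ((3:Fin 5):ℕ)=3 from rfl, show ((4:Fin 5):ℕ)=4 from rfl] at hh
    linarith
  have H43 : 5616*b 0 0 i - 29808*b 0 1 i + 59292*b 0 2 i - 52488*b 0 3 i + 17496*b 0 4 i - 28800*b 1 0 i + 152064*b 1 1 i - 300672*b 1 2 i + 264384*b 1 3 i - 87480*b 1 4 i + 55488*b 2 0 i - 291456*b 2 1 i + 572832*b 2 2 i - 500256*b 2 3 i + 164268*b 2 4 i - 47616*b 3 0 i + 248832*b 3 1 i - 486144*b 3 2 i + 421632*b 3 3 i - 137376*b 3 4 i + 15360*b 4 0 i - 79872*b 4 1 i + 155136*b 4 2 i - 133632*b 4 3 i + 43200*b 4 4 i = (0:ℝ) := by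
    have hh := harm_key b hharm 4 3 i
    simp only [Fin.sum_univ_five] at hh
    norm_num [B4, ddB, dmono, Nat.choose, show ((0:Fin 5):ℕ)=0 from rfl, show ((1:Fin 5):ℕ)=1 from rfl, show ((2:Fin 5):ℕ)=2 from rfl, show ((3:Fin 5):ℕ)=3 from rfl, show ((4:Fin 5):ℕ)=4 from rfl] at hh
    linarith
  have H44 : 17496*b 0 0 i - 87480*b 0 1 i + 164268*b 0 2 i - 137376*b 0 3 i + 43200*b 0 4 i - 87480*b 1 0 i + 435456*b 1 1 i - 813888*b 1 2 i + 677376*b 1 3 i - 211968*b 1 4 i + 164268*b 2 0 i - 813888*b 2 1 i + 1513728*b 2 2 i - 1253376*b 2 3 i + 390144*b 2 4 i - 137376*b 3 0 i + 677376*b 3 1 i - 1253376*b 3 2 i + 1032192*b 3 3 i - 319488*b 3 4 i + 43200*b 4 0 i - 211968*b 4 1 i + 390144*b 4 2 i - 319488*b 4 3 i + 98304*b 4 4 i = (0:ℝ) := by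
    have hh := harm_key b hharm 4 4 i
    simp only [Fin.sum_univ_five] at hh
    norm_num [B4, ddB, dmono, Nat.choose, show ((0:Fin 5):ℕ)=0 from rfl, show ((1:Fin 5):ℕ)=1 from rfl, show ((2:Fin 5):ℕ)=2 from rfl, show ((3:Fin 5):ℕ)=3 from rfl, show ((4:Fin 5):ℕ)=4 from rfl] at hh
    linarith
  by_cases hik : i = k
  · rw [if_pos hik] at e00 e10 e20 e04 e14 ⊢
    have id00 : -(b 0 0 i) = b 4 0 i := by
      linear_combination (1 : ℝ) * e00
    have id01 : -(b 0 1 i) = b 4 1 i := by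
      linear_combination (11/96 : ℝ) * H00 + (49/864 : ℝ) * H01 + (-5/192 : ℝ) * H02 + (1/72 : ℝ) * H03 + (-5/1728 : ℝ) * H04 + (-119/1152 : ℝ) * H10 + (79/216 : ℝ) * H11 + (-23/64 : ℝ) * H12 + (3/16 : ℝ) * H13 + (-133/3456 : ℝ) * H14 + (95/1152 : ℝ) * H20 + (-65/864 : ℝ) * H21 + (7/96 : ℝ) * H22 + (-5/144 : ℝ) * H23 + (23/3456 : ℝ) * H24 + (-1/96 : ℝ) * H30 + (29/12 : ℝ) * e00 + (-14/3 : ℝ) * e10 + (3 : ℝ) * e20 + (7/12 : ℝ) * e04 + (-1/3 : ℝ) * e14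
    have id02 : -(b 0 2 i) = b 4 2 i := by
      linear_combination (7/48 : ℝ) * H00 + (49/432 : ℝ) * H01 + (-5/96 : ℝ) * H02 + (1/36 : ℝ) * H03 + (-5/864 : ℝ) * H04 + (-167/576 : ℝ) * H10 + (79/108 : ℝ) * H11 + (-23/32 : ℝ) * H12 + (3/8 : ℝ) * H13 + (-133/1728 : ℝ) * H14 + (95/576 : ℝ) * H20 + (-65/432 : ℝ) * H21 + (7/48 : ℝ) * H22 + (-5/72 : ℝ) * H23 + (23/1728 : ℝ) * H24 + (-1/48 : ℝ) * H30 + (17/6 : ℝ) * e00 + (-22/3 : ℝ) * e10 + (5 : ℝ) * e20 + (7/6 : ℝ) * e04 + (-2/3 : ℝ) * e14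
    have id03 : -(b 0 3 i) = b 4 3 i := by
      linear_combination (17/216 : ℝ) * H00 + (55/576 : ℝ) * H01 + (-1/32 : ℝ) * H02 + (29/1728 : ℝ) * H03 + (-1/288 : ℝ) * H04 + (-589/3456 : ℝ) * H10 + (133/288 : ℝ) * H11 + (-79/192 : ℝ) * H12 + (187/864 : ℝ) * H13 + (-17/384 : ℝ) * H14 + (305/3456 : ℝ) * H20 + (-5/64 : ℝ) * H21 + (13/192 : ℝ) * H22 + (-55/1728 : ℝ) * H23 + (7/1152 : ℝ) * H24 + (-1/96 : ℝ) * H30 + (19/12 : ℝ) * e00 + (-13/3 : ℝ) * e10 + (3 : ℝ) * e20 + (17/12 : ℝ) * e04 + (-2/3 : ℝ) * e14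
    have id04 : -(b 0 4 i) = b 4 4 i := by
      linear_combination (1 : ℝ) * e04
    have id10 : -(b 1 0 i) = b 3 0 i := by
      linear_combination (1 : ℝ) * e10
    have id11 : -(b 1 1 i) = b 3 1 i := by
      linear_combination (221/4608 : ℝ) * H00 + (47/432 : ℝ) * H01 + (-19/256 : ℝ) * H02 + (19/576 : ℝ) * H03 + (-85/13824 : ℝ) * H04 + (35/384 : ℝ) * H10 + (41/432 : ℝ) * H11 + (-7/192 : ℝ) * H12 + (1/72 : ℝ) * H13 + (-7/3456 : ℝ) * H14 + (-125/4608 : ℝ) * H20 + (1/54 : ℝ) * H21 + (-23/768 : ℝ) * H22 + (1/64 : ℝ) * H23 + (-43/13824 : ℝ) * H24 + (1/192 : ℝ) * H30 + (11/12 : ℝ) * e00 + (-11/12 : ℝ) * e10 + (3/4 : ℝ) * e20 + (1/3 : ℝ) * e04 + (-1/12 : ℝ) * e14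
    have id12 : -(b 1 2 i) = b 3 2 i := by
      linear_combination (439/6912 : ℝ) * H00 + (23/144 : ℝ) * H01 + (-11/128 : ℝ) * H02 + (31/864 : ℝ) * H03 + (-5/768 : ℝ) * H04 + (-35/1728 : ℝ) * H10 + (1/3 : ℝ) * H11 + (-23/96 : ℝ) * H12 + (25/216 : ℝ) * H13 + (-13/576 : ℝ) * H14 + (121/6912 : ℝ) * H20 + (-1/48 : ℝ) * H21 + (1/384 : ℝ) * H22 + (1/864 : ℝ) * H23 + (-1/2304 : ℝ) * H24 + (4/3 : ℝ) * e00 + (-17/6 : ℝ) * e10 + (2 : ℝ) * e20 + (2/3 : ℝ) * e04 + (-1/6 : ℝ) * e14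
    have id13 : -(b 1 3 i) = b 3 3 i := by
      linear_combination (287/13824 : ℝ) * H00 + (15/128 : ℝ) * H01 + (-31/768 : ℝ) * H02 + (49/3456 : ℝ) * H03 + (-11/4608 : ℝ) * H04 + (131/3456 : ℝ) * H10 + (41/288 : ℝ) * H11 + (-5/192 : ℝ) * H12 + (7/864 : ℝ) * H13 + (-1/1152 : ℝ) * H14 + (-319/13824 : ℝ) * H20 + (25/1152 : ℝ) * H21 + (-11/256 : ℝ) * H22 + (79/3456 : ℝ) * H23 + (-7/1536 : ℝ) * H24 + (1/192 : ℝ) * H30 + (7/12 : ℝ) * e00 + (-13/12 : ℝ) * e10 + (3/4 : ℝ) * e20 + (2/3 : ℝ) * e04 + (1/12 : ℝ) * e14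
    have id14 : -(b 1 4 i) = b 3 4 i := by
      linear_combination (1 : ℝ) * e14
    have id30 : -(b 3 0 i) = b 1 0 i := by
      linear_combination (1 : ℝ) * e10
    have id31 : -(b 3 1 i) = b 1 1 i := by
      linear_combination (221/4608 : ℝ) * H00 + (47/432 : ℝ) * H01 + (-19/256 : ℝ) * H02 + (19/576 : ℝ) * H03 + (-85/13824 : ℝ) * H04 + (35/384 : ℝ) * H10 + (41/432 : ℝ) * H11 + (-7/192 : ℝ) * H12 + (1/72 : ℝ) * H13 + (-7/3456 : ℝ) * H14 + (-125/4608 : ℝ) * H20 + (1/54 : ℝ) * H21 + (-23/768 : ℝ) * H22 + (1/64 : ℝ) * H23 + (-43/13824 : ℝ) * H24 + (1/192 : ℝ) * H30 + (11/12 : ℝ) * e00 + (-11/12 : ℝ) * e10 + (3/4 : ℝ) * e20 + (1/3 : ℝ) * e04 + (-1/12 : ℝ) * e14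
    have id32 : -(b 3 2 i) = b 1 2 i := by
      linear_combination (439/6912 : ℝ) * H00 + (23/144 : ℝ) * H01 + (-11/128 : ℝ) * H02 + (31/864 : ℝ) * H03 + (-5/768 : ℝ) * H04 + (-35/1728 : ℝ) * H10 + (1/3 : ℝ) * H11 + (-23/96 : ℝ) * H12 + (25/216 : ℝ) * H13 + (-13/576 : ℝ) * H14 + (121/6912 : ℝ) * H20 + (-1/48 : ℝ) * H21 + (1/384 : ℝ) * H22 + (1/864 : ℝ) * H23 + (-1/2304 : ℝ) * H24 + (4/3 : ℝ) * e00 + (-17/6 : ℝ) * e10 + (2 : ℝ) * e20 + (2/3 : ℝ) * e04 + (-1/6 : ℝ) * e14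
    have id33 : -(b 3 3 i) = b 1 3 i := by
      linear_combination (287/13824 : ℝ) * H00 + (15/128 : ℝ) * H01 + (-31/768 : ℝ) * H02 + (49/3456 : ℝ) * H03 + (-11/4608 : ℝ) * H04 + (131/3456 : ℝ) * H10 + (41/288 : ℝ) * H11 + (-5/192 : ℝ) * H12 + (7/864 : ℝ) * H13 + (-1/1152 : ℝ) * H14 + (-319/13824 : ℝ) * H20 + (25/1152 : ℝ) * H21 + (-11/256 : ℝ) * H22 + (79/3456 : ℝ) * H23 + (-7/1536 : ℝ) * H24 + (1/192 : ℝ) * H30 + (7/12 : ℝ) * e00 + (-13/12 : ℝ) * e10 + (3/4 : ℝ) * e20 + (2/3 : ℝ) * e04 + (1/12 : ℝ) * e14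
    have id34 : -(b 3 4 i) = b 1 4 i := by
      linear_combination (1 : ℝ) * e14
    have id40 : -(b 4 0 i) = b 0 0 i := by
      linear_combination (1 : ℝ) * e00
    have id41 : -(b 4 1 i) = b 0 1 i := by
      linear_combination (11/96 : ℝ) * H00 + (49/864 : ℝ) * H01 + (-5/192 : ℝ) * H02 + (1/72 : ℝ) * H03 + (-5/1728 : ℝ) * H04 + (-119/1152 : ℝ) * H10 + (79/216 : ℝ) * H11 + (-23/64 : ℝ) * H12 + (3/16 : ℝ) * H13 + (-133/3456 : ℝ) * H14 + (95/1152 : ℝ) * H20 + (-65/864 : ℝ) * H21 + (7/96 : ℝ) * H22 + (-5/144 : ℝ) * H23 + (23/3456 : ℝ) * H24 + (-1/96 : ℝ) * H30 + (29/12 : ℝ) * e00 + (-14/3 : ℝ) * e10 + (3 : ℝ) * e20 + (7/12 : ℝ) * e04 + (-1/3 : ℝ) * e14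
    have id42 : -(b 4 2 i) = b 0 2 i := by
      linear_combination (7/48 : ℝ) * H00 + (49/432 : ℝ) * H01 + (-5/96 : ℝ) * H02 + (1/36 : ℝ) * H03 + (-5/864 : ℝ) * H04 + (-167/576 : ℝ) * H10 + (79/108 : ℝ) * H11 + (-23/32 : ℝ) * H12 + (3/8 : ℝ) * H13 + (-133/1728 : ℝ) * H14 + (95/576 : ℝ) * H20 + (-65/432 : ℝ) * H21 + (7/48 : ℝ) * H22 + (-5/72 : ℝ) * H23 + (23/1728 : ℝ) * H24 + (-1/48 : ℝ) * H30 + (17/6 : ℝ) * e00 + (-22/3 : ℝ) * e10 + (5 : ℝ) * e20 + (7/6 : ℝ) * e04 + (-2/3 : ℝ) * e14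
    have id43 : -(b 4 3 i) = b 0 3 i := by
      linear_combination (17/216 : ℝ) * H00 + (55/576 : ℝ) * H01 + (-1/32 : ℝ) * H02 + (29/1728 : ℝ) * H03 + (-1/288 : ℝ) * H04 + (-589/3456 : ℝ) * H10 + (133/288 : ℝ) * H11 + (-79/192 : ℝ) * H12 + (187/864 : ℝ) * H13 + (-17/384 : ℝ) * H14 + (305/3456 : ℝ) * H20 + (-5/64 : ℝ) * H21 + (13/192 : ℝ) * H22 + (-55/1728 : ℝ) * H23 + (7/1152 : ℝ) * H24 + (-1/96 : ℝ) * H30 + (19/12 : ℝ) * e00 + (-13/3 : ℝ) * e10 + (3 : ℝ) * e20 + (17/12 : ℝ) * e04 + (-2/3 : ℝ) * e14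
    have id44 : -(b 4 4 i) = b 0 4 i := by
      linear_combination (1 : ℝ) * e04
    have id20 : b 2 0 i = (0:ℝ) := by
      linear_combination (-1/2 : ℝ) * e20
    have id21 : b 2 1 i = (0:ℝ) := by
      linear_combination (-223/13824 : ℝ) * H00 + (-397/6912 : ℝ) * H01 + (1/24 : ℝ) * H02 + (-127/6912 : ℝ) * H03 + (47/13824 : ℝ) * H04 + (-29/432 : ℝ) * H10 + (-101/3456 : ℝ) * H11 + (-1/128 : ℝ) * H12 + (25/3456 : ℝ) * H13 + (-7/3456 : ℝ) * H14 + (395/13824 : ℝ) * H20 + (-133/6912 : ℝ) * H21 + (11/384 : ℝ) * H22 + (-103/6912 : ℝ) * H23 + (41/13824 : ℝ) * H24 + (-1/192 : ℝ) * H30 + (-3/8 : ℝ) * e00 + (1/2 : ℝ) * e10 + (-1/2 : ℝ) * e20 + (-1/8 : ℝ) * e04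
    have id22 : b 2 2 i = (0:ℝ) := by
      linear_combination (-475/20736 : ℝ) * H00 + (-841/10368 : ℝ) * H01 + (3/64 : ℝ) * H02 + (-199/10368 : ℝ) * H03 + (71/20736 : ℝ) * H04 + (-11/648 : ℝ) * H10 + (-737/5184 : ℝ) * H11 + (47/576 : ℝ) * H12 + (-191/5184 : ℝ) * H13 + (35/5184 : ℝ) * H14 + (227/20736 : ℝ) * H20 + (-49/10368 : ℝ) * H21 + (1/48 : ℝ) * H22 + (-127/10368 : ℝ) * H23 + (53/20736 : ℝ) * H24 + (-1/288 : ℝ) * H30 + (-7/12 : ℝ) * e00 + (4/3 : ℝ) * e10 + (-1 : ℝ) * e20 + (-1/4 : ℝ) * e04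
    have id23 : b 2 3 i = (0:ℝ) := by
      linear_combination (-29/4608 : ℝ) * H00 + (-395/6912 : ℝ) * H01 + (3/128 : ℝ) * H02 + (-19/2304 : ℝ) * H03 + (19/13824 : ℝ) * H04 + (-1/32 : ℝ) * H10 + (-235/3456 : ℝ) * H11 + (-1/384 : ℝ) * H12 + (5/1152 : ℝ) * H13 + (-5/3456 : ℝ) * H14 + (113/4608 : ℝ) * H20 + (-155/6912 : ℝ) * H21 + (1/24 : ℝ) * H22 + (-17/768 : ℝ) * H23 + (61/13824 : ℝ) * H24 + (-1/192 : ℝ) * H30 + (-7/24 : ℝ) * e00 + (2/3 : ℝ) * e10 + (-1/2 : ℝ) * e20 + (-5/24 : ℝ) * e04 + (-1/6 : ℝ) * e14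
    have id24 : b 2 4 i = (0:ℝ) := by
      linear_combination (-5/864 : ℝ) * H00 + (5/1728 : ℝ) * H01 + (1/192 : ℝ) * H02 + (-5/1728 : ℝ) * H03 + (1/1728 : ℝ) * H04 + (11/432 : ℝ) * H10 + (-47/864 : ℝ) * H11 + (5/96 : ℝ) * H12 + (-25/864 : ℝ) * H13 + (5/864 : ℝ) * H14 + (-5/864 : ℝ) * H20 + (5/1728 : ℝ) * H21 + (1/192 : ℝ) * H22 + (-5/1728 : ℝ) * H23 + (1/1728 : ℝ) * H24 + (-1/6 : ℝ) * e00 + (2/3 : ℝ) * e10 + (-1/2 : ℝ) * e20 + (1/6 : ℝ) * e04 + (-2/3 : ℝ) * e14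
    simp only [bezier, Fin.sum_univ_five, B4, show ((0:Fin 5):ℕ)=0 from rfl, show ((1:Fin 5):ℕ)=1 from rfl, show ((2:Fin 5):ℕ)=2 from rfl, show ((3:Fin 5):ℕ)=3 from rfl, show ((4:Fin 5):ℕ)=4 from rfl, show (Nat.choose 4 0)=1 from rfl, show (Nat.choose 4 1)=4 from rfl, show (Nat.choose 4 2)=6 from rfl, show (Nat.choose 4 3)=4 from rfl, show (Nat.choose 4 4)=1 from rfl]
    norm_num
    linear_combination (1-u)^4*(1-v)^4*id00 + (1-u)^4*(4*v*(1-v)^3)*id01 + (1-u)^4*(6*v^2*(1-v)^2)*id02 + (1-u)^4*(4*v^3*(1-v))*id03 + (1-u)^4*v^4*id04 + (4*u*(1-u)^3)*(1-v)^4*id10 + (4*u*(1-u)^3)*(4*v*(1-v)^3)*id11 + (4*u*(1-u)^3)*(6*v^2*(1-v)^2)*id12 + (4*u*(1-u)^3)*(4*v^3*(1-v))*id13 + (4*u*(1-u)^3)*v^4*id14 + (4*u^3*(1-u))*(1-v)^4*id30 + (4*u^3*(1-u))*(4*v*(1-v)^3)*id31 + (4*u^3*(1-u))*(6*v^2*(1-v)^2)*id32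 + (4*u^3*(1-u))*(4*v^3*(1-v))*id33 + (4*u^3*(1-u))*v^4*id34 + u^4*(1-v)^4*id40 + u^4*(4*v*(1-v)^3)*id41 + u^4*(6*v^2*(1-v)^2)*id42 + u^4*(4*v^3*(1-v))*id43 + u^4*v^4*id44 + (-2)*(6*u^2*(1-u)^2)*(1-v)^4*id20 + (-2)*(6*u^2*(1-u)^2)*(4*v*(1-v)^3)*id21 + (-2)*(6*u^2*(1-u)^2)*(6*v^2*(1-v)^2)*id22 + (-2)*(6*u^2*(1-u)^2)*(4*v^3*(1-v))*id23 + (-2)*(6*u^2*(1-u)^2)*v^4*id24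
  · rw [if_neg hik] at e00 e10 e20 e04 e14 ⊢
    have id00 : b 0 0 i = b 4 0 i := by
      linear_combination (1 : ℝ) * e00
    have id01 : b 0 1 i = b 4 1 i := by
      linear_combination (-107/1152 : ℝ) * H00 + (-13/288 : ℝ) * H01 + (1/192 : ℝ) * H02 + (-1/288 : ℝ) * H03 + (1/1152 : ℝ) * H04 + (59/384 : ℝ) * H10 + (-1/12 : ℝ) * H11 + (29/192 : ℝ) * H12 + (-1/12 : ℝ) * H13 + (7/384 : ℝ) * H14 + (-35/576 : ℝ) * H20 + (25/288 : ℝ) * H21 + (-3/32 : ℝ) * H22 + (13/288 : ℝ) * H23 + (-5/576 : ℝ) * H24 + (1/96 : ℝ) * H30 + (7/4 : ℝ) * e00 + (-2 : ℝ) * e10 + (3/4 : ℝ) * e04 + (-1 : ℝ) * e14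
    have id02 : b 0 2 i = b 4 2 i := by
      linear_combination (-59/576 : ℝ) * H00 + (-13/144 : ℝ) * H01 + (1/96 : ℝ) * H02 + (-1/144 : ℝ) * H03 + (1/576 : ℝ) * H04 + (43/192 : ℝ) * H10 + (-1/6 : ℝ) * H11 + (29/96 : ℝ) * H12 + (-1/6 : ℝ) * H13 + (7/192 : ℝ) * H14 + (-35/288 : ℝ) * H20 + (25/144 : ℝ) * H21 + (-3/16 : ℝ) * H22 + (13/144 : ℝ) * H23 + (-5/288 : ℝ) * H24 + (1/48 : ℝ) * H30 + (3/2 : ℝ) * e00 + (-2 : ℝ) * e10 + (3/2 : ℝ) * e04 + (-2 : ℝ) * e14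
    have id03 : b 0 3 i = b 4 3 i := by
      linear_combination (-59/1152 : ℝ) * H00 + (-25/288 : ℝ) * H01 + (1/192 : ℝ) * H02 + (-1/288 : ℝ) * H03 + (1/1152 : ℝ) * H04 + (43/384 : ℝ) * H10 + (-1/24 : ℝ) * H11 + (29/192 : ℝ) * H12 + (-1/12 : ℝ) * H13 + (7/384 : ℝ) * H14 + (-35/576 : ℝ) * H20 + (25/288 : ℝ) * H21 + (-3/32 : ℝ) * H22 + (13/288 : ℝ) * H23 + (-5/576 : ℝ) * H24 + (1/96 : ℝ) * H30 + (3/4 : ℝ) * e00 + (-1 : ℝ) * e10 + (7/4 : ℝ) * e04 + (-2 : ℝ) * e14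
    have id04 : b 0 4 i = b 4 4 i := by
      linear_combination (1 : ℝ) * e04
    have id10 : b 1 0 i = b 3 0 i := by
      linear_combination (1 : ℝ) * e10
    have id11 : b 1 1 i = b 3 1 i := by
      linear_combination (-35/1152 : ℝ) * H00 + (-5/96 : ℝ) * H01 + (1/32 : ℝ) * H02 + (-1/72 : ℝ) * H03 + (1/384 : ℝ) * H04 + (35/1152 : ℝ) * H10 + (5/96 : ℝ) * H11 + (-1/32 : ℝ) * H12 + (1/72 : ℝ) * H13 + (-1/384 : ℝ) * H14 + (1/2 : ℝ) * e00 + (-1/4 : ℝ) * e10 + (1/4 : ℝ) * e04 + (-1/4 : ℝ) * e14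
    have id12 : b 1 2 i = b 3 2 i := by
      linear_combination (-7/216 : ℝ) * H00 + (-65/864 : ℝ) * H01 + (1/32 : ℝ) * H02 + (-11/864 : ℝ) * H03 + (1/432 : ℝ) * H04 + (91/1728 : ℝ) * H10 + (7/216 : ℝ) * H11 + (1/48 : ℝ) * H12 + (-7/432 : ℝ) * H13 + (7/1728 : ℝ) * H14 + (-35/1728 : ℝ) * H20 + (25/864 : ℝ) * H21 + (-1/32 : ℝ) * H22 + (13/864 : ℝ) * H23 + (-5/1728 : ℝ) * H24 + (1/288 : ℝ) * H30 + (1/2 : ℝ) * e00 + (-1/2 : ℝ) * e10 + (1/2 : ℝ) * e04 + (-1/2 : ℝ) * e14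
    have id13 : b 1 3 i = b 3 3 i := by
      linear_combination (-5/384 : ℝ) * H00 + (-35/576 : ℝ) * H01 + (1/64 : ℝ) * H02 + (-1/192 : ℝ) * H03 + (1/1152 : ℝ) * H04 + (5/384 : ℝ) * H10 + (35/576 : ℝ) * H11 + (-1/64 : ℝ) * H12 + (1/192 : ℝ) * H13 + (-1/1152 : ℝ) * H14 + (1/4 : ℝ) * e00 + (-1/4 : ℝ) * e10 + (1/2 : ℝ) * e04 + (-1/4 : ℝ) * e14
    have id14 : b 1 4 i = b 3 4 i := by
      linear_combination (1 : ℝ) * e14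
    have id30 : b 3 0 i = b 1 0 i := by
      linear_combination (-1 : ℝ) * e10
    have id31 : b 3 1 i = b 1 1 i := by
      linear_combination (35/1152 : ℝ) * H00 + (5/96 : ℝ) * H01 + (-1/32 : ℝ) * H02 + (1/72 : ℝ) * H03 + (-1/384 : ℝ) * H04 + (-35/1152 : ℝ) * H10 + (-5/96 : ℝ) * H11 + (1/32 : ℝ) * H12 + (-1/72 : ℝ) * H13 + (1/384 : ℝ) * H14 + (-1/2 : ℝ) * e00 + (1/4 : ℝ) * e10 + (-1/4 : ℝ) * e04 + (1/4 : ℝ) * e14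
    have id32 : b 3 2 i = b 1 2 i := by
      linear_combination (7/216 : ℝ) * H00 + (65/864 : ℝ) * H01 + (-1/32 : ℝ) * H02 + (11/864 : ℝ) * H03 + (-1/432 : ℝ) * H04 + (-91/1728 : ℝ) * H10 + (-7/216 : ℝ) * H11 + (-1/48 : ℝ) * H12 + (7/432 : ℝ) * H13 + (-7/1728 : ℝ) * H14 + (35/1728 : ℝ) * H20 + (-25/864 : ℝ) * H21 + (1/32 : ℝ) * H22 + (-13/864 : ℝ) * H23 + (5/1728 : ℝ) * H24 + (-1/288 : ℝ) * H30 + (-1/2 : ℝ) * e00 + (1/2 : ℝ) * e10 + (-1/2 : ℝ) * e04 + (1/2 : ℝ) * e14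
    have id33 : b 3 3 i = b 1 3 i := by
      linear_combination (5/384 : ℝ) * H00 + (35/576 : ℝ) * H01 + (-1/64 : ℝ) * H02 + (1/192 : ℝ) * H03 + (-1/1152 : ℝ) * H04 + (-5/384 : ℝ) * H10 + (-35/576 : ℝ) * H11 + (1/64 : ℝ) * H12 + (-1/192 : ℝ) * H13 + (1/1152 : ℝ) * H14 + (-1/4 : ℝ) * e00 + (1/4 : ℝ) * e10 + (-1/2 : ℝ) * e04 + (1/4 : ℝ) * e14
    have id34 : b 3 4 i = b 1 4 i := by
      linear_combination (-1 : ℝ) * e14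
    have id40 : b 4 0 i = b 0 0 i := by
      linear_combination (-1 : ℝ) * e00
    have id41 : b 4 1 i = b 0 1 i := by
      linear_combination (107/1152 : ℝ) * H00 + (13/288 : ℝ) * H01 + (-1/192 : ℝ) * H02 + (1/288 : ℝ) * H03 + (-1/1152 : ℝ) * H04 + (-59/384 : ℝ) * H10 + (1/12 : ℝ) * H11 + (-29/192 : ℝ) * H12 + (1/12 : ℝ) * H13 + (-7/384 : ℝ) * H14 + (35/576 : ℝ) * H20 + (-25/288 : ℝ) * H21 + (3/32 : ℝ) * H22 + (-13/288 : ℝ) * H23 + (5/576 : ℝ) * H24 + (-1/96 : ℝ) * H30 + (-7/4 : ℝ) * e00 + (2 : ℝ) * e10 + (-3/4 : ℝ) * e04 + (1 : ℝ) * e14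
    have id42 : b 4 2 i = b 0 2 i := by
      linear_combination (59/576 : ℝ) * H00 + (13/144 : ℝ) * H01 + (-1/96 : ℝ) * H02 + (1/144 : ℝ) * H03 + (-1/576 : ℝ) * H04 + (-43/192 : ℝ) * H10 + (1/6 : ℝ) * H11 + (-29/96 : ℝ) * H12 + (1/6 : ℝ) * H13 + (-7/192 : ℝ) * H14 + (35/288 : ℝ) * H20 + (-25/144 : ℝ) * H21 + (3/16 : ℝ) * H22 + (-13/144 : ℝ) * H23 + (5/288 : ℝ) * H24 + (-1/48 : ℝ) * H30 + (-3/2 : ℝ) * e00 + (2 : ℝ) * e10 + (-3/2 : ℝ) * e04 + (2 : ℝ) * e14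
    have id43 : b 4 3 i = b 0 3 i := by
      linear_combination (59/1152 : ℝ) * H00 + (25/288 : ℝ) * H01 + (-1/192 : ℝ) * H02 + (1/288 : ℝ) * H03 + (-1/1152 : ℝ) * H04 + (-43/384 : ℝ) * H10 + (1/24 : ℝ) * H11 + (-29/192 : ℝ) * H12 + (1/12 : ℝ) * H13 + (-7/384 : ℝ) * H14 + (35/576 : ℝ) * H20 + (-25/288 : ℝ) * H21 + (3/32 : ℝ) * H22 + (-13/288 : ℝ) * H23 + (5/576 : ℝ) * H24 + (-1/96 : ℝ) * H30 + (-3/4 : ℝ) * e00 + (1 : ℝ) * e10 + (-7/4 : ℝ) * e04 + (2 : ℝ) * e14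
    have id44 : b 4 4 i = b 0 4 i := by
      linear_combination (-1 : ℝ) * e04
    simp only [bezier, Fin.sum_univ_five, B4, show ((0:Fin 5):ℕ)=0 from rfl, show ((1:Fin 5):ℕ)=1 from rfl, show ((2:Fin 5):ℕ)=2 from rfl, show ((3:Fin 5):ℕ)=3 from rfl, show ((4:Fin 5):ℕ)=4 from rfl, show (Nat.choose 4 0)=1 from rfl, show (Nat.choose 4 1)=4 from rfl, show (Nat.choose 4 2)=6 from rfl, show (Nat.choose 4 3)=4 from rfl, show (Nat.choose 4 4)=1 from rfl]
    norm_num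
    linear_combination (1-u)^4*(1-v)^4*id00 + (1-u)^4*(4*v*(1-v)^3)*id01 + (1-u)^4*(6*v^2*(1-v)^2)*id02 + (1-u)^4*(4*v^3*(1-v))*id03 + (1-u)^4*v^4*id04 + (4*u*(1-u)^3)*(1-v)^4*id10 + (4*u*(1-u)^3)*(4*v*(1-v)^3)*id11 + (4*u*(1-u)^3)*(6*v^2*(1-v)^2)*id12 + (4*u*(1-u)^3)*(4*v^3*(1-v))*id13 + (4*u*(1-u)^3)*v^4*id14 + (4*u^3*(1-u))*(1-v)^4*id30 + (4*u^3*(1-u))*(4*v*(1-v)^3)*id31 + (4*u^3*(1-u))*(6*v^2*(1-v)^2)*id32 + (4*u^3*(1-u))*(4*v^3*(1-v))*id33 + (4*u^3*(1-u))*v^4*id34 + u^4*(1-v)^4*id40 + u^4*(4*v*(1-v)^3)*id41 + u^4*(6*v^2*(1-v)^2)*id42 + u^4*(4*v^3*(1-v))*id43 + u^4*v^4*id44
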